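/- arXiv:2411.06342 — 5 statements merged into one kernel-verified Lean document; each statement's English description precedes it below -/
import Mathlib

section
/- An estimator of the inverse propensity score is perfectly calibrated for covariate balance (i.e., the balance integral vanishes for all square-integrable test functions h composed with the estimated propensity) if and only if the estimated propensity score equals, almost surely, the conditional expectation of the true propensity score given the estimated propensity score. -/
open MeasureTheory

/-- An estimator `πn⁻¹` of the inverse propensity score is perfectly
calibrated for covariate balance (the balance integral vanishes for all square-integrable
test functions `h` composed with `πn`) if and only if `πn` equals, `P`-almost surely,
the conditional expectation of the true propensity score `π0` given `πn`. -/
theorem isotonic_perfect_calibration_iff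
    {Ω : Type*} [MeasurableSpace Ω] (P : Measure Ω) [IsProbabilityMeasure P]
    (π0 πn : Ω → ℝ) (hπ0meas : Measurable π0) (hπnmeas : Measurable πn)
    (hπ0range : ∀ ω, 0 < π0 ω ∧ π0 ω < 1)
    (c : ℝ) (hc : 0 < c) (hπnlb : ∀ ω, c ≤ πn ω) (hπnub : ∀ ω, πn ω ≤ 1) :
    (∀ h : ℝ → ℝ, Measurable h → MemLp (fun ω => h (πn ω)) 2 P →
        ∫ ω, h (πn ω) * (π0 ω / πn ω - 1) ∂P = 0) ↔
      πn =ᵐ[P] P[π0 | MeasurableSpace.comap πn Real.measurableSpace] := by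
  have hm : MeasurableSpace.comap πn Real.measurableSpace ≤ _ := hπnmeas.comap_le
  have hπn_pos : ∀ ω, 0 < πn ω := fun ω => lt_of_lt_of_le hc (hπnlb ω)
  have hπn_ne : ∀ ω, πn ω ≠ 0 := fun ω => (hπn_pos ω).ne'
  have hπ0int : Integrable π0 P := by
    refine Integrable.mono' (integrable_const 1) hπ0meas.aestronglyMeasurable ?_
    filter_upwards with ω
    rw [Real.norm_eq_abs, abs_le]
    exact ⟨by linarith [(hπ0range ω).1], (hπ0range ω).2.le⟩
  have hπnint : Integrable πn P := by
    refine Integrable.mono' (integrable_const 1) hπnmeas.aestronglyMeasurable ?_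
    filter_upwards with ω
    rw [Real.norm_eq_abs, abs_le]
    exact ⟨by linarith [hπn_pos ω], hπnub ω⟩
  have hπn_m : Measurable[MeasurableSpace.comap πn Real.measurableSpace] πn :=
    fun s hs => ⟨s, hs, rfl⟩
  constructor
  · intro hcal
    refine ae_eq_condExp_of_forall_setIntegral_eq hm hπ0int
      (fun s _ _ => hπnint.integrableOn) (fun s hs _ => ?_)
      (hπn_m.stronglyMeasurable.aestronglyMeasurable)
    obtain ⟨A, hA, rfl⟩ := hs
    have hsm : MeasurableSet (πn ⁻¹' A) := hπnmeas hA
    set h : ℝ → ℝ := fun x => x * Set.indicator A 1 x with hh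
    have hhmeas : Measurable h := measurable_id.mul (measurable_one.indicator hA)
    have hhL2 : MemLp (fun ω => h (πn ω)) 2 P := by
      refine MemLp.of_bound (hhmeas.comp hπnmeas).aestronglyMeasurable 1 ?_
      filter_upwards with ω
      rw [Real.norm_eq_abs, hh]
      by_cases hω : πn ω ∈ A
      · simp only [Set.indicator_of_mem hω, Pi.one_apply, mul_one]
        rw [abs_of_pos (hπn_pos ω)]; exact hπnub ω
      · simp [Set.indicator_of_notMem hω]
    have key := hcal h hhmeas hhL2
    have hident : (fun ω => h (πn ω) * (π0 ω / πn ω - 1)) =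
        fun ω => (πn ⁻¹' A).indicator (fun ω => π0 ω - πn ω) ω := by
      funext ω
      by_cases hω : πn ω ∈ A
      · rw [Set.indicator_of_mem (show ω ∈ πn ⁻¹' A from hω)]
        simp only [hh, Set.indicator_of_mem hω, Pi.one_apply, mul_one]
        rw [mul_sub, mul_one, mul_div_cancel₀ _ (hπn_ne ω)]
      · rw [Set.indicator_of_notMem (show ω ∉ πn ⁻¹' A from hω)]
        simp [hh, Set.indicator_of_notMem hω]
    rw [hident] at key
    rw [integral_indicator hsm] at key
    have hsub : ∫ ω in πn ⁻¹' A, (π0 ω - πn ω) ∂P =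
        (∫ ω in πn ⁻¹' A, π0 ω ∂P) - ∫ ω in πn ⁻¹' A, πn ω ∂P :=
      integral_sub hπ0int.integrableOn hπnint.integrableOn
    rw [hsub] at key
    linarith
  · intro hcond h hhmeas hhL2
    set f : Ω → ℝ := fun ω => h (πn ω) / πn ω with hf
    have hfmeas : Measurable f := (hhmeas.comp hπnmeas).div hπnmeas
    have hf_m : Measurable[MeasurableSpace.comap πn Real.measurableSpace] f :=
      (hhmeas.div measurable_id).comp hπn_m
    have hfL2 : MemLp f 2 P := by
      refine MemLp.of_le (hhL2.const_mul c⁻¹) hfmeas.aestronglyMeasurable ?_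
      filter_upwards with ω
      simp only [hf, Real.norm_eq_abs, abs_div, abs_mul,
        abs_of_pos (hπn_pos ω), abs_of_pos (inv_pos.mpr hc)]
      rw [div_le_iff₀ (hπn_pos ω), mul_comm c⁻¹, mul_assoc]
      nth_rewrite 1 [← mul_one |h (πn ω)|]
      refine mul_le_mul_of_nonneg_left ?_ (abs_nonneg _)
      rw [← div_eq_inv_mul]
      exact (one_le_div hc).mpr (hπnlb ω)
    have hfint : Integrable f P := hfL2.integrable one_le_two
    have hfπ0 : Integrable (fun ω => f ω * π0 ω) P := by
      refine Integrable.mono' hfint.norm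
        (hfmeas.mul hπ0meas).aestronglyMeasurable ?_
      filter_upwards with ω
      rw [Real.norm_eq_abs, abs_mul, Real.norm_eq_abs]
      nth_rewrite 2 [← mul_one |f ω|]
      gcongr
      rw [abs_le]
      exact ⟨by linarith [(hπ0range ω).1], (hπ0range ω).2.le⟩
    have hfπn : Integrable (fun ω => f ω * πn ω) P := by
      refine Integrable.mono' hfint.norm
        (hfmeas.mul hπnmeas).aestronglyMeasurable ?_
      filter_upwards with ω
      rw [Real.norm_eq_abs, abs_mul, Real.norm_eq_abs]
      nth_rewrite 2 [← mul_one |f ω|]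
      gcongr
      rw [abs_le]
      exact ⟨by linarith [hπn_pos ω], hπnub ω⟩
    have hident : (fun ω => h (πn ω) * (π0 ω / πn ω - 1)) =
        fun ω => f ω * π0 ω - f ω * πn ω := by
      funext ω
      simp only [hf]
      field_simp
      rw [mul_sub, mul_one, ← mul_div_assoc, mul_sub, sub_div,
        mul_div_assoc (h (πn ω)) (πn ω) (πn ω), div_self (hπn_ne ω), mul_one]
    rw [hident, integral_sub hfπ0 hfπn]
    have hpull : P[fun ω => f ω * π0 ω | MeasurableSpace.comap πn Real.measurableSpace]
        =ᵐ[P] fun ω => f ω * (P[π0 | MeasurableSpace.comap πn Real.measurableSpace]) ω := by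
      have := condExp_mul_of_stronglyMeasurable_left (μ := P)
        hf_m.stronglyMeasurable (by exact hfπ0) hπ0int
      exact this
    have h1 : ∫ ω, f ω * π0 ω ∂P =
        ∫ ω, f ω * (P[π0 | MeasurableSpace.comap πn Real.measurableSpace]) ω ∂P := by
      rw [← integral_condExp hm (f := fun ω => f ω * π0 ω)]
      exact integral_congr_ae hpull
    have h2 : ∫ ω, f ω * πn ω ∂P =
        ∫ ω, f ω * (P[π0 | MeasurableSpace.comap πn Real.measurableSpace]) ω ∂P := by
      refine integral_congr_ae ?_
      filter_upwards [hcond] with ω hω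
      rw [hω]
    rw [h1, h2, sub_self]
end

section
/- Let f_n be the piecewise-constant solution to the antitonic (isotonic with reversed order) least-squares-type empirical risk minimization with loss 1(A_i = 1)·θ(x_i)² − 2θ(x_i). Then for every function h: ℝ → ℝ that is constant on the level sets of f_n, the empirical balancing equation (1/n)Σ_i h(f_n(x_i))·(1(A_i = 1)·f_n(x_i) − 1) = 0 holds, provided f_n takes only finite values at the data points. -/
open Finset

/-- Let `f` be a (finite-valued) solution of the antitonic empirical risk
minimization with loss `1(Aᵢ = 1)·θ(xᵢ)² − 2θ(xᵢ)`.  Then for every `h : ℝ → ℝ`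
(automatically constant on level sets of `f` after composition) the empirical balancing
equation `(1/n) Σᵢ h(f(xᵢ))·(1(Aᵢ = 1)·f(xᵢ) − 1) = 0` holds. -/
theorem antitonic_erm_empirical_balancing
    (n : ℕ) (hn : 0 < n) (x : Fin n → ℝ) (A : Fin n → Bool)
    (f : ℝ → ℝ) (hf : Antitone f)
    (hmin : ∀ θ : ℝ → ℝ, Antitone θ →
      (∑ i, ((if A i then (1 : ℝ) else 0) * f (x i) ^ 2 - 2 * f (x i))) ≤
        ∑ i, ((if A i then (1 : ℝ) else 0) * θ (x i) ^ 2 - 2 * θ (x i))) :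
    ∀ h : ℝ → ℝ,
      (1 / (n : ℝ)) * ∑ i, h (f (x i)) * ((if A i then (1 : ℝ) else 0) * f (x i) - 1) = 0 := by
  intro h
  suffices H : ∑ i, h (f (x i)) * ((if A i then (1 : ℝ) else 0) * f (x i) - 1) = 0 by
    rw [H, mul_zero]
  set P : Fin n → ℝ := fun i => (if A i then (1 : ℝ) else 0) * f (x i) - 1 with hP
  -- Master lemma: perturbation in direction ψ∘f that keeps antitonicity gives
  -- a vanishing first-order term.
  have master : ∀ (ψ : ℝ → ℝ),
      (∀ ε : ℝ, |ε| < 1 → Antitone (fun t => f t + ε * ψ (f t))) →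
      ∑ i, ψ (f (x i)) * P i = 0 := by
    intro ψ hψ
    set B := ∑ i, ψ (f (x i)) * P i with hB
    set C := ∑ i, (if A i then (1:ℝ) else 0) * ψ (f (x i))^2 with hC
    have hC0 : 0 ≤ C := by
      apply Finset.sum_nonneg
      intro i _
      by_cases hA : A i <;> simp [hA] <;> positivity
    have key : ∀ ε : ℝ, |ε| < 1 → 0 ≤ 2*ε*B + ε^2*C := by
      intro ε hε
      have hmin' := hmin (fun t => f t + ε * ψ (f t)) (hψ ε hε)
      have expand : ∀ i : Fin n,
          (if A i then (1:ℝ) else 0) * (f (x i) + ε * ψ (f (x i)))^2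
            - 2*(f (x i) + ε * ψ (f (x i)))
          = ((if A i then (1:ℝ) else 0) * f (x i)^2 - 2*f (x i))
            + (2*ε) * (ψ (f (x i)) * P i)
            + ε^2 * ((if A i then (1:ℝ) else 0) * ψ (f (x i))^2) := by
        intro i
        by_cases hA : A i <;> simp [hP, hA] <;> ring
      have e2 : ∑ i, ((if A i then (1:ℝ) else 0) * (f (x i) + ε * ψ (f (x i)))^2
            - 2*(f (x i) + ε * ψ (f (x i))))
          = (∑ i, ((if A i then (1:ℝ) else 0) * f (x i)^2 - 2*f (x i)))
            + (2*ε)*B + ε^2*C := by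
        simp only [expand]
        rw [Finset.sum_add_distrib, Finset.sum_add_distrib,
          ← Finset.mul_sum, ← Finset.mul_sum]
      rw [e2] at hmin'
      linarith
    by_contra hBne
    have hB2 : 0 < B^2 := by positivity
    have hBa : 0 < |B| := abs_pos.mpr hBne
    set m : ℝ := min (1/(2*(|B|+1))) (1/(2*(C+1))) with hm
    have hm0 : 0 < m := by
      apply lt_min <;> positivity
    have hεd : |(-B*m)| < 1 := by
      rw [abs_mul, abs_neg, abs_of_pos hm0]
      have h1 : m ≤ 1/(2*(|B|+1)) := min_le_left _ _
      have h2 : |B| * m ≤ |B| * (1/(2*(|B|+1))) :=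
        mul_le_mul_of_nonneg_left h1 (abs_nonneg B)
      have h3 : |B| * (1/(2*(|B|+1))) < 1 := by
        rw [mul_one_div, div_lt_one (by positivity)]
        nlinarith [abs_nonneg B]
      linarith
    have hkey := key (-B*m) hεd
    have h4 : m ≤ 1/(2*(C+1)) := min_le_right _ _
    have h5 : m * (2*(C+1)) ≤ 1 := by
      rw [← le_div_iff₀ (by positivity)]
      exact h4
    have h6 : m * C ≤ 1/2 := by nlinarith
    nlinarith [mul_pos hB2 hm0, mul_le_mul_of_nonneg_left h6 (le_of_lt (mul_pos hB2 hm0))]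
  -- clamp functions are admissible perturbation directions
  have clampsum : ∀ lo hi : ℝ, lo < hi →
      ∑ i, (min (hi - lo) (max (f (x i) - lo) 0)) * P i = 0 := by
    intro lo hi hlh
    apply master (fun u => min (hi - lo) (max (u - lo) 0))
    intro ε hε s t hst
    have hab : f t ≤ f s := hf hst
    dsimp only
    set a := f t with ha
    set b := f s with hb2
    have mono : min (hi-lo) (max (a-lo) 0) ≤ min (hi-lo) (max (b-lo) 0) := by
      simp only [min_def, max_def]
      split_ifs <;> linarith
    have lip : min (hi-lo) (max (b-lo) 0) - min (hi-lo) (max (a-lo) 0) ≤ b - a := by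
      simp only [min_def, max_def]
      split_ifs <;> linarith
    have hε' := abs_lt.mp hε
    set Q := min (hi-lo) (max (b-lo) 0)
    set R := min (hi-lo) (max (a-lo) 0)
    -- goal : a + ε * R ≤ b + ε * Q
    rcases le_or_gt 0 ε with hsgn | hsgn
    · nlinarith [mul_le_mul_of_nonneg_left mono hsgn]
    · have l1 : ε * (b - a) ≤ ε * (Q - R) := by
        apply mul_le_mul_of_nonpos_left (by linarith) hsgn.le
      nlinarith [mul_nonneg (by linarith : (0:ℝ) ≤ 1 + ε) (by linarith : (0:ℝ) ≤ b - a)]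
  set V : Finset ℝ := Finset.image (fun i => f (x i)) Finset.univ with hV
  have hmemV : ∀ i : Fin n, f (x i) ∈ V := fun i => Finset.mem_image_of_mem _ (Finset.mem_univ i)
  -- sums over upper level sets vanish
  have Sge : ∀ c : ℝ, ∑ i, (if c ≤ f (x i) then P i else 0) = 0 := by
    intro c
    rcases (V.filter (· < c)).eq_empty_or_nonempty with hW | hW
    · have hall : ∀ i : Fin n, c ≤ f (x i) := by
        intro i
        by_contra hc
        have : f (x i) ∈ V.filter (· < c) :=
          Finset.mem_filter.mpr ⟨hmemV i, by push_neg at hc; exact hc⟩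
        simp [hW] at this
      have hcst := master (fun _ => 1) (by
        intro ε hε s t hst
        dsimp only
        have := hf hst
        linarith)
      calc ∑ i, (if c ≤ f (x i) then P i else 0) = ∑ i, (1:ℝ) * P i := by
            apply Finset.sum_congr rfl
            intro i _
            rw [if_pos (hall i), one_mul]
        _ = 0 := hcst
    · set m := (V.filter (· < c)).max' hW with hmdef
      have hmmem := (V.filter (· < c)).max'_mem hW
      have hmlt : m < c := (Finset.mem_filter.mp hmmem).2
      have hcs := clampsum m c hmlt
      have e : ∀ i : Fin n, (min (c - m) (max (f (x i) - m) 0)) * P i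
          = (c - m) * (if c ≤ f (x i) then P i else 0) := by
        intro i
        by_cases hc : c ≤ f (x i)
        · rw [if_pos hc]
          have h1 : max (f (x i) - m) 0 = f (x i) - m := max_eq_left (by linarith)
          rw [h1, min_eq_left (by linarith), mul_comm]
        · rw [if_neg hc]
          push_neg at hc
          have hfle : f (x i) ≤ m := by
            apply Finset.le_max'
            exact Finset.mem_filter.mpr ⟨hmemV i, hc⟩
          have h1 : max (f (x i) - m) 0 = 0 := max_eq_right (by linarith)
          rw [h1, min_eq_right (by linarith)]
          ring
      rw [Finset.sum_congr rfl (fun i _ => e i), ← Finset.mul_sum] at hcs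
      rcases mul_eq_zero.mp hcs with h0 | h0
      · linarith
      · exact h0
  -- sums over strict upper level sets vanish
  have Sgt : ∀ c : ℝ, ∑ i, (if c < f (x i) then P i else 0) = 0 := by
    intro c
    rcases (V.filter (fun v => c < v)).eq_empty_or_nonempty with hW | hW
    · apply Finset.sum_eq_zero
      intro i _
      rw [if_neg]
      intro hc
      have : f (x i) ∈ V.filter (fun v => c < v) :=
        Finset.mem_filter.mpr ⟨hmemV i, hc⟩
      simp [hW] at this
    · set m := (V.filter (fun v => c < v)).min' hW with hmdef
      have hmmem := (V.filter (fun v => c < v)).min'_mem hW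
      have hmgt : c < m := (Finset.mem_filter.mp hmmem).2
      have hcs := clampsum c m hmgt
      have e : ∀ i : Fin n, (min (m - c) (max (f (x i) - c) 0)) * P i
          = (m - c) * (if c < f (x i) then P i else 0) := by
        intro i
        by_cases hc : c < f (x i)
        · rw [if_pos hc]
          have hfge : m ≤ f (x i) := by
            apply Finset.min'_le
            exact Finset.mem_filter.mpr ⟨hmemV i, hc⟩
          have h1 : max (f (x i) - c) 0 = f (x i) - c := max_eq_left (by linarith)
          rw [h1, min_eq_left (by linarith), mul_comm]
        · rw [if_neg hc]
          push_neg at hc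
          have h1 : max (f (x i) - c) 0 = 0 := max_eq_right (by linarith)
          rw [h1, min_eq_right (by linarith)]
          ring
      rw [Finset.sum_congr rfl (fun i _ => e i), ← Finset.mul_sum] at hcs
      rcases mul_eq_zero.mp hcs with h0 | h0
      · linarith
      · exact h0
  -- level-set sums vanish
  have Seq : ∀ c : ℝ, ∑ i, (if f (x i) = c then P i else 0) = 0 := by
    intro c
    have e : ∀ i : Fin n, (if f (x i) = c then P i else 0)
        = (if c ≤ f (x i) then P i else 0) - (if c < f (x i) then P i else 0) := by
      intro i
      rcases lt_trichotomy (f (x i)) c with hc | hc | hc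
      · rw [if_neg (by linarith), if_neg (by linarith), if_neg (by linarith)]
        ring
      · rw [if_pos hc, if_pos (le_of_eq hc.symm), if_neg (by linarith)]
        ring
      · rw [if_neg (by linarith), if_pos (le_of_lt hc), if_pos hc]
        ring
    rw [Finset.sum_congr rfl (fun i _ => e i), Finset.sum_sub_distrib, Sge c, Sgt c]
    ring
  -- group the final sum by level sets
  have fib : ∑ c ∈ V, ∑ i ∈ Finset.univ.filter (fun i => f (x i) = c), h (f (x i)) * P i
      = ∑ i, h (f (x i)) * P i :=
    Finset.sum_fiberwise_of_maps_to (fun i _ => hmemV i) _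
  rw [← fib]
  apply Finset.sum_eq_zero
  intro c hc
  have e : ∀ i ∈ Finset.univ.filter (fun i => f (x i) = c), h (f (x i)) * P i = h c * P i := by
    intro i hi
    rw [(Finset.mem_filter.mp hi).2]
  rw [Finset.sum_congr rfl e, ← Finset.mul_sum]
  have : ∑ i ∈ Finset.univ.filter (fun i => f (x i) = c), P i = 0 := by
    rw [Finset.sum_filter]
    exact Seq c
  rw [this, mul_zero]
end

section
/- Binning preserves bounded variation up to a factor of 3: let g: [−M, M] → ℝ have total variation norm at most K, let X be a random variable taking values in [−M, M], and let {B_t} be a partition of [−M, M] into intervals. Then the function t ↦ E[g(X) | X ∈ B_{t}], viewed as a function of the representative point (constant on each bin, with bins ordered as intervals), has total variation norm at most 3K. -/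
open MeasureTheory

/-- Binning preserves bounded variation up to a factor of 3: if
`g : [−M, M] → ℝ` has total variation norm `|g(−M)| + V(g)` at most `K`, `Q` is the law of a
random variable with values in `[−M, M]`, and `{B i}` is a partition of `[−M, M]` into
ordered intervals of positive `Q`-mass, then the binned function
`x ↦ E_Q[g | B (b x)]` (constant on each bin) has total variation norm at most `3K`. -/
theorem binning_preserves_bounded_variation
    {ι : Type*} (M K : ℝ) (hM : 0 < M)
    (g : ℝ → ℝ) (hgmeas : Measurable g)
    (hgBV : BoundedVariationOn g (Set.Icc (-M) M))
    (hgK : |g (-M)| + (eVariationOn g (Set.Icc (-M) M)).toReal ≤ K)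
    (Q : Measure ℝ) [IsProbabilityMeasure Q]
    (hQsupp : Q (Set.Icc (-M) M)ᶜ = 0)
    (hgint : Integrable g Q)
    (B : ι → Set ℝ) (b : ℝ → ι)
    (hBmeas : ∀ i, MeasurableSet (B i))
    (hBsub : ∀ i, B i ⊆ Set.Icc (-M) M)
    (hBint : ∀ i, (B i).OrdConnected)
    (hBord : ∀ i j, i ≠ j → (∀ x ∈ B i, ∀ y ∈ B j, x < y) ∨ (∀ x ∈ B i, ∀ y ∈ B j, y < x))
    (hBpos : ∀ i, 0 < Q (B i))
    (hmem : ∀ x ∈ Set.Icc (-M) M, x ∈ B (b x))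
    (gbar : ℝ → ℝ)
    (hgbar : ∀ x, gbar x = (∫ y in B (b x), g y ∂Q) / (Q (B (b x))).toReal) :
    |gbar (-M)| + (eVariationOn gbar (Set.Icc (-M) M)).toReal ≤ 3 * K := by
  have hMM : (-M : ℝ) ≤ M := by linarith
  have hMI : (-M : ℝ) ∈ Set.Icc (-M) M := Set.left_mem_Icc.2 hMM
  have hV : eVariationOn g (Set.Icc (-M) M) ≠ ⊤ := hgBV
  -- bins are nonempty
  have hBne : ∀ i, (B i).Nonempty := by
    intro i
    rcases Set.eq_empty_or_nonempty (B i) with h | h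
    · exfalso; have := hBpos i; rw [h] at this; simp at this
    · exact h
  have hBddb : ∀ i, BddBelow (B i) := fun i => ⟨-M, fun x hx => (hBsub i hx).1⟩
  have hBdda : ∀ i, BddAbove (B i) := fun i => ⟨M, fun x hx => (hBsub i hx).2⟩
  -- endpoints of bins
  have hloI : ∀ i, sInf (B i) ∈ Set.Icc (-M) M := by
    intro i
    obtain ⟨x, hx⟩ := hBne i
    exact ⟨le_csInf (hBne i) (fun y hy => (hBsub i hy).1),
      le_trans (csInf_le (hBddb i) hx) (hBsub i hx).2⟩
  have hhiI : ∀ i, sSup (B i) ∈ Set.Icc (-M) M := by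
    intro i
    obtain ⟨x, hx⟩ := hBne i
    exact ⟨le_trans (hBsub i hx).1 (le_csSup (hBdda i) hx),
      csSup_le (hBne i) (fun y hy => (hBsub i hy).2)⟩
  have hlohi : ∀ i, sInf (B i) ≤ sSup (B i) := by
    intro i
    obtain ⟨x, hx⟩ := hBne i
    exact le_trans (csInf_le (hBddb i) hx) (le_csSup (hBdda i) hx)
  -- g is bounded on [-M, M]
  have hgb : ∀ z ∈ Set.Icc (-M) M, |g z - g (-M)| ≤ (eVariationOn g (Set.Icc (-M) M)).toReal := by
    intro z hz
    have h1 : edist (g z) (g (-M)) ≤ eVariationOn g (Set.Icc (-M) M) :=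
      eVariationOn.edist_le g hz hMI
    have h2 := ENNReal.toReal_mono hV h1
    rwa [edist_dist, ENNReal.toReal_ofReal dist_nonneg, Real.dist_eq] at h2
  have himgb : ∀ i, BddBelow (g '' B i) := by
    intro i
    refine ⟨g (-M) - (eVariationOn g (Set.Icc (-M) M)).toReal, ?_⟩
    rintro _ ⟨x, hx, rfl⟩
    have h := abs_le.1 (hgb x (hBsub i hx))
    linarith [h.1]
  have himga : ∀ i, BddAbove (g '' B i) := by
    intro i
    refine ⟨g (-M) + (eVariationOn g (Set.Icc (-M) M)).toReal, ?_⟩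
    rintro _ ⟨x, hx, rfl⟩
    have h := abs_le.1 (hgb x (hBsub i hx))
    linarith [h.2]
  -- the averaged value lies between inf and sup of g on the bin
  have havg : ∀ i, sInf (g '' B i) ≤ (∫ y in B i, g y ∂Q) / (Q (B i)).toReal ∧
      (∫ y in B i, g y ∂Q) / (Q (B i)).toReal ≤ sSup (g '' B i) := by
    intro i
    have hQpos : 0 < (Q (B i)).toReal := ENNReal.toReal_pos (hBpos i).ne' (measure_ne_top Q _)
    have hint : IntegrableOn g (B i) Q := hgint.integrableOn
    have hcint : ∀ c : ℝ, IntegrableOn (fun _ => c) (B i) Q :=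
      fun c => integrableOn_const (measure_ne_top Q _)
    constructor
    · rw [le_div_iff₀ hQpos]
      calc sInf (g '' B i) * (Q (B i)).toReal
          = ∫ _ in B i, sInf (g '' B i) ∂Q := by rw [setIntegral_const, smul_eq_mul, measureReal_def]; ring
        _ ≤ ∫ y in B i, g y ∂Q := by
            refine setIntegral_mono_on (hcint _) hint (hBmeas i) (fun y hy => ?_)
            exact csInf_le (himgb i) ⟨y, hy, rfl⟩
    · rw [div_le_iff₀ hQpos]
      calc (∫ y in B i, g y ∂Q)
          ≤ ∫ _ in B i, sSup (g '' B i) ∂Q := by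
            refine setIntegral_mono_on hint (hcint _) (hBmeas i) (fun y hy => ?_)
            exact le_csSup (himga i) ⟨y, hy, rfl⟩
        _ = sSup (g '' B i) * (Q (B i)).toReal := by rw [setIntegral_const, smul_eq_mul, measureReal_def]; ring
  have havg' : ∀ x, sInf (g '' B (b x)) ≤ gbar x ∧ gbar x ≤ sSup (g '' B (b x)) := by
    intro x; rw [hgbar x]; exact havg (b x)
  -- key estimate: for x ≤ y in I and any r between inf/sup of g on bin of y,
  -- |gbar x - r| is at most the variation of g on the hull interval
  have keyD : ∀ x ∈ Set.Icc (-M) M, ∀ y ∈ Set.Icc (-M) M, x ≤ y →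
      ∀ r : ℝ, sInf (g '' B (b y)) ≤ r → r ≤ sSup (g '' B (b y)) →
      |gbar x - r| ≤ (eVariationOn g (Set.Icc (sInf (B (b x))) (sSup (B (b y))))).toReal := by
    intro x hx y hy hxy r hr1 hr2
    set i := b x with hidef
    set j := b y with hjdef
    set J := Set.Icc (sInf (B i)) (sSup (B j)) with hJdef
    have hxBi : x ∈ B i := hmem x hx
    have hyBj : y ∈ B j := hmem y hy
    have horder : i ≠ j → ∀ p ∈ B i, ∀ q ∈ B j, p < q := by
      intro hij
      rcases hBord i j hij with h | h
      · exact h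
      · exfalso
        have := h x hxBi y hyBj
        have hxy' : x ≠ y := fun hxyeq => hij (by rw [hidef, hjdef, hxyeq])
        exact absurd (lt_of_le_of_lt hxy this) (lt_irrefl x)
    have hBiJ : B i ⊆ J := by
      intro p hp
      refine ⟨csInf_le (hBddb i) hp, ?_⟩
      by_cases hij : i = j
      · rw [← hij]; exact le_csSup (hBdda i) hp
      · exact le_trans (horder hij p hp y hyBj).le (le_csSup (hBdda j) hyBj)
    have hBjJ : B j ⊆ J := by
      intro q hq
      refine ⟨?_, le_csSup (hBdda j) hq⟩
      by_cases hij : i = j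
      · rw [hij]; exact csInf_le (hBddb j) hq
      · exact le_trans (csInf_le (hBddb i) hxBi) (horder hij x hxBi q hq).le
    have hJI : J ⊆ Set.Icc (-M) M := Set.Icc_subset_Icc (hloI i).1 (hhiI j).2
    have hEJ : eVariationOn g J ≠ ⊤ := ne_top_of_le_ne_top hV (eVariationOn.mono g hJI)
    have hstep : ∀ p ∈ J, ∀ q ∈ J, |g p - g q| ≤ (eVariationOn g J).toReal := by
      intro p hp q hq
      have h1 : edist (g p) (g q) ≤ eVariationOn g J := eVariationOn.edist_le g hp hq
      have h2 := ENNReal.toReal_mono hEJ h1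
      rwa [edist_dist, ENNReal.toReal_ofReal dist_nonneg, Real.dist_eq] at h2
    refine le_of_forall_pos_le_add (fun ε hε => ?_)
    rcases le_total (gbar x) r with hle | hle
    · -- need p ∈ B i with small g p, q ∈ B j with large g q
      have hgx := (havg' x).1
      obtain ⟨gp, ⟨p, hp, rfl⟩, hgp⟩ := exists_lt_of_csInf_lt ((hBne i).image g)
        (show sInf (g '' B i) < sInf (g '' B i) + ε / 2 by linarith)
      obtain ⟨gq, ⟨q, hq, rfl⟩, hgq⟩ := exists_lt_of_lt_csSup ((hBne j).image g)
        (show r - ε / 2 < sSup (g '' B j) by linarith)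
      have := hstep q (hBjJ hq) p (hBiJ hp)
      have habs : g q - g p ≤ |g q - g p| := le_abs_self _
      rw [abs_of_nonpos (by linarith)]
      linarith
    · have hgx := (havg' x).2
      obtain ⟨gp, ⟨p, hp, rfl⟩, hgp⟩ := exists_lt_of_lt_csSup ((hBne i).image g)
        (show gbar x - ε / 2 < sSup (g '' B i) by linarith)
      obtain ⟨gq, ⟨q, hq, rfl⟩, hgq⟩ := exists_lt_of_csInf_lt ((hBne j).image g)
        (show sInf (g '' B j) < sInf (g '' B j) + ε / 2 by linarith)
      have := hstep p (hBiJ hp) q (hBjJ hq)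
      have habs : g p - g q ≤ |g p - g q| := le_abs_self _
      rw [abs_of_nonneg (by linarith)]
      linarith
  -- edist form
  have keyE : ∀ x ∈ Set.Icc (-M) M, ∀ y ∈ Set.Icc (-M) M, x ≤ y →
      edist (gbar y) (gbar x) ≤ eVariationOn g (Set.Icc (sInf (B (b x))) (sSup (B (b y)))) := by
    intro x hx y hy hxy
    have h := keyD x hx y hy hxy (gbar y) (havg' y).1 (havg' y).2
    rw [edist_dist, Real.dist_eq, abs_sub_comm]
    exact ENNReal.ofReal_le_of_le_toReal h
  -- interval decomposition of variation
  have hdecomp : ∀ a c d : ℝ, a ≤ c → c ≤ d →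
      eVariationOn g (Set.Icc a c) + eVariationOn g (Set.Icc c d) =
        eVariationOn g (Set.Icc a d) := by
    intro a c d h1 h2
    have := eVariationOn.Icc_add_Icc g (s := Set.univ) h1 h2 (Set.mem_univ c)
    simpa [Set.univ_inter] using this
  -- main induction
  have main : ∀ (u : ℕ → ℝ), Monotone u → (∀ k, u k ∈ Set.Icc (-M) M) → ∀ n : ℕ,
      (∑ k ∈ Finset.range n, edist (gbar (u (k+1))) (gbar (u k))) +
        eVariationOn g (Set.Icc (sInf (B (b (u n)))) (sSup (B (b (u n)))))
      ≤ 2 * eVariationOn g (Set.Icc (sInf (B (b (u 0)))) (sSup (B (b (u n))))) := by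
    intro u hu hus n
    induction n with
    | zero =>
      simp only [Finset.range_zero, Finset.sum_empty, zero_add]
      calc eVariationOn g (Set.Icc (sInf (B (b (u 0)))) (sSup (B (b (u 0)))))
          = 1 * eVariationOn g (Set.Icc (sInf (B (b (u 0)))) (sSup (B (b (u 0))))) := by
            rw [one_mul]
        _ ≤ 2 * eVariationOn g (Set.Icc (sInf (B (b (u 0)))) (sSup (B (b (u 0))))) := by
            gcongr <;> norm_num
    | succ n ih =>
      rw [Finset.sum_range_succ]
      by_cases hsame : b (u n) = b (u (n+1))
      · have hgeq : gbar (u (n+1)) = gbar (u n) := by rw [hgbar, hgbar, hsame]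
        rw [hgeq, edist_self, add_zero, ← hsame]
        exact ih
      · have hne : u n ≠ u (n+1) := fun h => hsame (by rw [h])
        have hlt : u n < u (n+1) := lt_of_le_of_ne (hu (Nat.le_succ n)) hne
        have horder : ∀ p ∈ B (b (u n)), ∀ q ∈ B (b (u (n+1))), p < q := by
          rcases hBord _ _ hsame with h | h
          · exact h
          · exfalso
            exact absurd (h (u n) (hmem _ (hus n)) (u (n+1)) (hmem _ (hus (n+1))))
              (not_lt.2 hlt.le)
        have hstepord : sSup (B (b (u n))) ≤ sInf (B (b (u (n+1)))) :=
          csSup_le (hBne _) (fun p hp => le_csInf (hBne _) (fun q hq => (horder p hp q hq).le))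
        have h0n : sInf (B (b (u 0))) ≤ sSup (B (b (u n))) := by
          calc sInf (B (b (u 0))) ≤ u 0 := csInf_le (hBddb _) (hmem _ (hus 0))
            _ ≤ u n := hu (Nat.zero_le n)
            _ ≤ sSup (B (b (u n))) := le_csSup (hBdda _) (hmem _ (hus n))
        have hD := keyE (u n) (hus n) (u (n+1)) (hus (n+1)) (hu (Nat.le_succ n))
        -- abbreviations
        set α0 := sInf (B (b (u 0)))
        set αn := sInf (B (b (u n)))
        set βn := sSup (B (b (u n)))
        set α1 := sInf (B (b (u (n+1))))
        set β1 := sSup (B (b (u (n+1))))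
        have e1 : eVariationOn g (Set.Icc αn β1) =
            eVariationOn g (Set.Icc αn βn) + eVariationOn g (Set.Icc βn α1) +
              eVariationOn g (Set.Icc α1 β1) := by
          rw [← hdecomp αn βn β1 (hlohi _) (le_trans hstepord (hlohi _)),
            ← hdecomp βn α1 β1 hstepord (hlohi _), add_assoc]
        have e2 : eVariationOn g (Set.Icc α0 β1) =
            eVariationOn g (Set.Icc α0 βn) + eVariationOn g (Set.Icc βn α1) +
              eVariationOn g (Set.Icc α1 β1) := by
          rw [← hdecomp α0 βn β1 h0n (le_trans hstepord (hlohi _)),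
            ← hdecomp βn α1 β1 hstepord (hlohi _), add_assoc]
        calc (∑ k ∈ Finset.range n, edist (gbar (u (k+1))) (gbar (u k))) +
              edist (gbar (u (n+1))) (gbar (u n)) + eVariationOn g (Set.Icc α1 β1)
            ≤ (∑ k ∈ Finset.range n, edist (gbar (u (k+1))) (gbar (u k))) +
              eVariationOn g (Set.Icc αn β1) + eVariationOn g (Set.Icc α1 β1) := by
              gcongr
          _ = ((∑ k ∈ Finset.range n, edist (gbar (u (k+1))) (gbar (u k))) +
              eVariationOn g (Set.Icc αn βn)) + eVariationOn g (Set.Icc βn α1) +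
              2 * eVariationOn g (Set.Icc α1 β1) := by
              rw [e1, two_mul]; ring
          _ ≤ 2 * eVariationOn g (Set.Icc α0 βn) + eVariationOn g (Set.Icc βn α1) +
              2 * eVariationOn g (Set.Icc α1 β1) := by gcongr
          _ ≤ 2 * eVariationOn g (Set.Icc α0 βn) + 2 * eVariationOn g (Set.Icc βn α1) +
              2 * eVariationOn g (Set.Icc α1 β1) := by
              gcongr
              calc eVariationOn g (Set.Icc βn α1) = 1 * eVariationOn g (Set.Icc βn α1) := by
                    rw [one_mul]
                _ ≤ 2 * eVariationOn g (Set.Icc βn α1) := by gcongr <;> norm_num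
          _ = 2 * eVariationOn g (Set.Icc α0 β1) := by rw [e2]; ring
  -- variation of gbar is at most twice that of g
  have hvar : eVariationOn gbar (Set.Icc (-M) M) ≤ 2 * eVariationOn g (Set.Icc (-M) M) := by
    apply iSup_le
    rintro ⟨n, u, hu, hus⟩
    calc (∑ k ∈ Finset.range n, edist (gbar (u (k+1))) (gbar (u k)))
        ≤ (∑ k ∈ Finset.range n, edist (gbar (u (k+1))) (gbar (u k))) +
          eVariationOn g (Set.Icc (sInf (B (b (u n)))) (sSup (B (b (u n))))) := le_self_add
      _ ≤ 2 * eVariationOn g (Set.Icc (sInf (B (b (u 0)))) (sSup (B (b (u n))))) :=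
          main u hu hus n
      _ ≤ 2 * eVariationOn g (Set.Icc (-M) M) := by
          gcongr
          exact eVariationOn.mono g (Set.Icc_subset_Icc (hloI _).1 (hhiI _).2)
  -- bound on |gbar (-M)|
  have hb0 : |gbar (-M)| ≤ |g (-M)| + (eVariationOn g (Set.Icc (-M) M)).toReal := by
    have hmemM : (-M : ℝ) ∈ B (b (-M)) := hmem _ hMI
    have h := keyD (-M) hMI (-M) hMI le_rfl (g (-M))
      (csInf_le (himgb _) ⟨-M, hmemM, rfl⟩) (le_csSup (himga _) ⟨-M, hmemM, rfl⟩)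
    have h2 : (eVariationOn g (Set.Icc (sInf (B (b (-M)))) (sSup (B (b (-M)))))).toReal ≤
        (eVariationOn g (Set.Icc (-M) M)).toReal :=
      ENNReal.toReal_mono hV (eVariationOn.mono g (Set.Icc_subset_Icc (hloI _).1 (hhiI _).2))
    calc |gbar (-M)| = |(gbar (-M) - g (-M)) + g (-M)| := by ring_nf
      _ ≤ |gbar (-M) - g (-M)| + |g (-M)| := abs_add_le _ _
      _ ≤ |g (-M)| + (eVariationOn g (Set.Icc (-M) M)).toReal := by linarith
  -- put everything together
  have h2top : (2 : ENNReal) * eVariationOn g (Set.Icc (-M) M) ≠ ⊤ :=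
    ENNReal.mul_ne_top (by norm_num) hV
  have h2 : (eVariationOn gbar (Set.Icc (-M) M)).toReal ≤
      2 * (eVariationOn g (Set.Icc (-M) M)).toReal := by
    have := ENNReal.toReal_mono h2top hvar
    rwa [ENNReal.toReal_mul, ENNReal.toReal_ofNat] at this
  have habs : (0 : ℝ) ≤ |g (-M)| := abs_nonneg _
  linarith
end

section
/- If the average calibration error δ_n² satisfies the self-bounding inequality δ_n² ≤ φ_n(δ_n) + Z_n, where Z_n = O_p(n^{-2/3}) and φ_n is a (random) nonnegative nondecreasing function whose expectation satisfies E[φ_n(δ)] ≤ C·n^{-1/2}·√δ·(1 + √δ/(√n δ²)) for all δ > 0, then δ_n² = O_p(n^{-2/3}). -/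
open MeasureTheory

set_option maxHeartbeats 1000000

lemma shell_exists {x d0 : ℝ} (hd0 : 0 < d0) (hx : d0 < x) :
    ∃ s : ℕ, 2 ^ s * d0 < x ∧ x ≤ 2 ^ (s + 1) * d0 := by
  have hex : ∃ m : ℕ, x ≤ 2 ^ (m + 1) * d0 := by
    obtain ⟨m, hm⟩ := pow_unbounded_of_one_lt (x / d0) (one_lt_two (α := ℝ))
    refine ⟨m, ?_⟩
    rw [div_lt_iff₀ hd0] at hm
    have h2 : (2:ℝ) ^ m ≤ 2 ^ (m + 1) := by
      apply pow_le_pow_right₀ (by norm_num) (Nat.le_succ m)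
    nlinarith
  classical
  refine ⟨Nat.find hex, ?_, Nat.find_spec hex⟩
  rcases Nat.eq_zero_or_pos (Nat.find hex) with h0 | h0
  · rw [h0]; simpa using hx
  · obtain ⟨t, ht⟩ := Nat.exists_eq_succ_of_ne_zero h0.ne'
    have hmin := Nat.find_min hex (m := t) (by omega)
    push_neg at hmin
    rw [ht]; exact hmin


/-- If the average calibration error `δₙ²` satisfies the self-bounding
inequality `δₙ² ≤ φₙ(δₙ) + Zₙ` with `Zₙ = O_p(n^{−2/3})` and random nonnegative
nondecreasing functions `φₙ` whose expectations satisfy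
`E[φₙ(δ)] ≤ C·n^{−1/2}·√δ·(1 + √δ/(√n·δ²))` for all `δ > 0`, then `δₙ² = O_p(n^{−2/3})`. -/
theorem self_bounding_peeling_rate
    {Ω : Type*} [MeasurableSpace Ω] (P : Measure Ω) [IsProbabilityMeasure P]
    (δ Z : ℕ → Ω → ℝ) (φ : ℕ → Ω → ℝ → ℝ)
    (hδmeas : ∀ n, Measurable (δ n)) (hZmeas : ∀ n, Measurable (Z n))
    (hφmeas : ∀ n d, Measurable (fun ω => φ n ω d))
    (hφint : ∀ n d, Integrable (fun ω => φ n ω d) P)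
    (hδnonneg : ∀ n ω, 0 ≤ δ n ω)
    (hφmono : ∀ n ω, Monotone (φ n ω))
    (hφnonneg : ∀ n ω d, 0 ≤ φ n ω d)
    (hself : ∀ n ω, (δ n ω) ^ 2 ≤ φ n ω (δ n ω) + Z n ω)
    (C : ℝ) (hC : 0 < C)
    (hφexp : ∀ n : ℕ, 1 ≤ n → ∀ d : ℝ, 0 < d →
      ∫ ω, φ n ω d ∂P ≤
        C * (n : ℝ) ^ (-(1 : ℝ) / 2) * Real.sqrt d *
          (1 + Real.sqrt d / (Real.sqrt (n : ℝ) * d ^ 2)))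
    (hZ : ∀ ε : ℝ, 0 < ε → ∃ K : ℝ, 0 < K ∧ ∀ n : ℕ, 1 ≤ n →
      (P {ω | K * (n : ℝ) ^ (-(2 : ℝ) / 3) < |Z n ω|}).toReal ≤ ε) :
    ∀ ε : ℝ, 0 < ε → ∃ K : ℝ, 0 < K ∧ ∀ n : ℕ, 1 ≤ n →
      (P {ω | K * (n : ℝ) ^ (-(2 : ℝ) / 3) < (δ n ω) ^ 2}).toReal ≤ ε := by
  intro ε hε
  obtain ⟨KZ, hKZpos, hKZ⟩ := hZ (ε / 2) (by linarith)
  set M : ℝ := max 1 (max (2 * KZ) (32 * C / ε)) with hMdef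
  have hM1 : (1 : ℝ) ≤ M := le_max_left _ _
  have hM0 : (0 : ℝ) < M := lt_of_lt_of_le one_pos hM1
  have hMKZ : 2 * KZ ≤ M := le_trans (le_max_left _ _) (le_max_right _ _)
  have hMC : 32 * C / ε ≤ M := le_trans (le_max_right _ _) (le_max_right _ _)
  refine ⟨M ^ 4, by positivity, ?_⟩
  intro n hn
  have hnp : (0 : ℝ) < (n : ℝ) := by exact_mod_cast Nat.lt_of_lt_of_le Nat.zero_lt_one hn
  have hn1 : (1 : ℝ) ≤ (n : ℝ) := by exact_mod_cast hn
  set r : ℝ := (n : ℝ) ^ (-(2 : ℝ) / 3) with hrdef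
  have hrpos : 0 < r := Real.rpow_pos_of_pos hnp _
  set d0 : ℝ := M ^ 2 * (n : ℝ) ^ (-(1 : ℝ) / 3) with hd0def
  have hn3 : (0 : ℝ) < (n : ℝ) ^ (-(1 : ℝ) / 3) := Real.rpow_pos_of_pos hnp _
  have hd0pos : 0 < d0 := by positivity
  have hd0sq : d0 ^ 2 = M ^ 4 * r := by
    rw [hd0def, mul_pow, ← Real.rpow_natCast ((n : ℝ) ^ (-(1 : ℝ) / 3)) 2,
      ← Real.rpow_mul hnp.le, hrdef]
    norm_num
    exact Or.inl (by ring)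
  -- the bad event for Z and the peeling events
  set B : Set Ω := {ω | KZ * r < |Z n ω|} with hBdef
  set A : ℕ → Set Ω := fun s => {ω | 4 ^ s * (M ^ 4 * r) / 2 ≤ φ n ω (2 ^ (s + 1) * d0)}
    with hAdef
  have hsub : {ω | M ^ 4 * r < δ n ω ^ 2} ⊆ B ∪ ⋃ s, A s := by
    intro ω hω
    simp only [Set.mem_setOf_eq] at hω
    by_cases hB : KZ * r < |Z n ω|
    · exact Or.inl hB
    push_neg at hB
    right
    have hδgt : d0 < δ n ω := by
      by_contra h
      push_neg at h
      have h2 : δ n ω ^ 2 ≤ d0 ^ 2 := pow_le_pow_left₀ (hδnonneg n ω) h 2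
      rw [hd0sq] at h2; linarith
    obtain ⟨s, hs1, hs2⟩ := shell_exists hd0pos hδgt
    refine Set.mem_iUnion.2 ⟨s, ?_⟩
    simp only [hAdef, Set.mem_setOf_eq]
    have hmono := hφmono n ω hs2
    have hself' := hself n ω
    have hZle : Z n ω ≤ KZ * r := le_trans (le_abs_self _) hB
    have h4 : (4 : ℝ) ^ s = 2 ^ s * 2 ^ s := by
      rw [show (4 : ℝ) = 2 * 2 by norm_num, mul_pow]
    have hδ2 : 4 ^ s * (M ^ 4 * r) < δ n ω ^ 2 := by
      have h1 : (0 : ℝ) ≤ 2 ^ s * d0 := by positivity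
      have h2 : (2 ^ s * d0) ^ 2 < δ n ω ^ 2 := by
        exact pow_lt_pow_left₀ hs1 h1 (by norm_num)
      calc 4 ^ s * (M ^ 4 * r) = (2 ^ s * d0) ^ 2 := by rw [← hd0sq, h4]; ring
        _ < δ n ω ^ 2 := h2
    have h4s1 : (1 : ℝ) ≤ 4 ^ s := one_le_pow₀ (by norm_num)
    have hKZM : KZ * r ≤ 4 ^ s * (M ^ 4 * r) / 2 := by
      have hM4 : M ≤ M ^ 4 := by
        simpa using pow_le_pow_right₀ hM1 (show 1 ≤ 4 by norm_num)
      have : KZ ≤ M ^ 4 / 2 := by linarith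
      nlinarith
    linarith
  -- Markov bound on each peeling event
  have hPA : ∀ s : ℕ, (P (A s)).toReal ≤ 8 * C / M ^ 3 * (1 / 2) ^ s := by
    intro s
    set ds : ℝ := 2 ^ (s + 1) * d0 with hdsdef
    have hdspos : 0 < ds := by positivity
    have has : (0 : ℝ) < 4 ^ s * (M ^ 4 * r) / 2 := by positivity
    have hmark := mul_meas_ge_le_integral_of_nonneg (μ := P)
      (f := fun ω => φ n ω ds) (Filter.Eventually.of_forall fun ω => hφnonneg n ω ds)
      (hφint n ds) (4 ^ s * (M ^ 4 * r) / 2)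
    have hexp := hφexp n hn ds hdspos
    -- auxiliary exponent identities
    have hn6 : (0 : ℝ) < (n : ℝ) ^ (-(1 : ℝ) / 6) := Real.rpow_pos_of_pos hnp _
    have e1 : ((n : ℝ) ^ (-(1 : ℝ) / 6)) ^ 2 = (n : ℝ) ^ (-(1 : ℝ) / 3) := by
      rw [← Real.rpow_natCast ((n : ℝ) ^ (-(1 : ℝ) / 6)) 2, ← Real.rpow_mul hnp.le]
      norm_num
    have e2 : (n : ℝ) ^ (-(1 : ℝ) / 2) * (n : ℝ) ^ (-(1 : ℝ) / 6) = r := by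
      rw [← Real.rpow_add hnp, hrdef]
      norm_num
    have e3 : ((n : ℝ) ^ (-(1 : ℝ) / 3)) ^ 3 = ((n : ℝ))⁻¹ := by
      rw [← Real.rpow_natCast ((n : ℝ) ^ (-(1 : ℝ) / 3)) 3, ← Real.rpow_mul hnp.le]
      norm_num
      exact (Real.rpow_neg_one _)
    have hsqrtd0 : Real.sqrt d0 = M * (n : ℝ) ^ (-(1 : ℝ) / 6) := by
      have : d0 = (M * (n : ℝ) ^ (-(1 : ℝ) / 6)) ^ 2 := by rw [mul_pow, e1, hd0def]
      rw [this, Real.sqrt_sq (by positivity)]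
    have hsqrt2 : Real.sqrt ((2 : ℝ) ^ (s + 1)) ≤ 2 ^ (s + 1) := by
      have h1 : (1 : ℝ) ≤ 2 ^ (s + 1) := one_le_pow₀ (by norm_num)
      have h2 : (2 : ℝ) ^ (s + 1) ≤ ((2 : ℝ) ^ (s + 1)) ^ 2 := by nlinarith
      have := Real.sqrt_le_sqrt h2
      rwa [Real.sqrt_sq (by positivity)] at this
    have hsqrtds : Real.sqrt ds ≤ 2 ^ (s + 1) * (M * (n : ℝ) ^ (-(1 : ℝ) / 6)) := by
      rw [hdsdef, Real.sqrt_mul (by positivity), hsqrtd0]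
      exact mul_le_mul_of_nonneg_right hsqrt2 (by positivity)
    -- the correction factor is at most 1
    have hu0 : 0 ≤ Real.sqrt ds / (Real.sqrt (n : ℝ) * ds ^ 2) := by positivity
    have hu1 : Real.sqrt ds / (Real.sqrt (n : ℝ) * ds ^ 2) ≤ 1 := by
      have h1 : (n : ℝ) ^ (-(1 : ℝ) / 3) ≤ ds := by
        have hM2 : (1 : ℝ) ≤ M ^ 2 := one_le_pow₀ hM1
        have h2s : (1 : ℝ) ≤ 2 ^ (s + 1) := one_le_pow₀ (by norm_num)
        have h6 := mul_le_mul h2s (mul_le_mul hM2 le_rfl hn3.le (by positivity))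
          (by positivity) (by positivity)
        rw [hdsdef, hd0def]
        simpa using h6
      have hds3 : ((n : ℝ))⁻¹ ≤ ds ^ 3 := by
        have := pow_le_pow_left₀ hn3.le h1 3
        rwa [e3] at this
      have h2 : ds ≤ (n : ℝ) * ds ^ 4 := by
        have h3 : (n : ℝ) * (n : ℝ)⁻¹ ≤ (n : ℝ) * ds ^ 3 :=
          mul_le_mul_of_nonneg_left hds3 hnp.le
        rw [mul_inv_cancel₀ hnp.ne'] at h3
        nlinarith
      rw [div_le_one (by positivity)]
      have h4 : Real.sqrt ds ≤ Real.sqrt ((n : ℝ) * ds ^ 4) := Real.sqrt_le_sqrt h2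
      have h5 : Real.sqrt ((n : ℝ) * ds ^ 4) = Real.sqrt (n : ℝ) * ds ^ 2 := by
        rw [Real.sqrt_mul hnp.le, show ds ^ 4 = (ds ^ 2) ^ 2 by ring,
          Real.sqrt_sq (by positivity)]
      rw [h5] at h4
      exact h4
    -- bound the expectation
    have hE : C * (n : ℝ) ^ (-(1 : ℝ) / 2) * Real.sqrt ds *
        (1 + Real.sqrt ds / (Real.sqrt (n : ℝ) * ds ^ 2)) ≤ 4 * 2 ^ s * C * M * r := by
      have hn2 : (0 : ℝ) < (n : ℝ) ^ (-(1 : ℝ) / 2) := Real.rpow_pos_of_pos hnp _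
      calc C * (n : ℝ) ^ (-(1 : ℝ) / 2) * Real.sqrt ds *
            (1 + Real.sqrt ds / (Real.sqrt (n : ℝ) * ds ^ 2))
          ≤ C * (n : ℝ) ^ (-(1 : ℝ) / 2) * Real.sqrt ds * 2 := by
            apply mul_le_mul_of_nonneg_left (by linarith) (by positivity)
        _ ≤ C * (n : ℝ) ^ (-(1 : ℝ) / 2) * (2 ^ (s + 1) * (M * (n : ℝ) ^ (-(1 : ℝ) / 6))) * 2 := by
            gcongr
        _ = 4 * 2 ^ s * C * M * ((n : ℝ) ^ (-(1 : ℝ) / 2) * (n : ℝ) ^ (-(1 : ℝ) / 6)) := by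
            rw [pow_succ]; ring
        _ = 4 * 2 ^ s * C * M * r := by rw [e2]
    have hrhs : 4 ^ s * (M ^ 4 * r) / 2 * (8 * C / M ^ 3 * (1 / 2) ^ s) =
        4 * 2 ^ s * C * M * r := by
      have h4 : (4 : ℝ) ^ s = 2 ^ s * 2 ^ s := by
        rw [show (4 : ℝ) = 2 * 2 by norm_num, mul_pow]
      have h2s : ((2 : ℝ) ^ s) ≠ 0 := by positivity
      rw [h4, one_div, inv_pow]
      field_simp
      ring
    have hchain : 4 ^ s * (M ^ 4 * r) / 2 * (P (A s)).toReal ≤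
        4 ^ s * (M ^ 4 * r) / 2 * (8 * C / M ^ 3 * (1 / 2) ^ s) := by
      rw [hrhs]
      refine le_trans ?_ (le_trans hexp hE)
      simpa only [hAdef, measureReal_def] using hmark
    exact le_of_mul_le_mul_left hchain has
  -- sum the peeling bounds
  have hsummable : Summable (fun s : ℕ => 8 * C / M ^ 3 * (1 / 2 : ℝ) ^ s) :=
    (summable_geometric_of_lt_one (by norm_num) (by norm_num)).mul_left _
  have hsum : ∑' s, P (A s) ≤ ENNReal.ofReal (ε / 2) := by
    calc ∑' s, P (A s) ≤ ∑' s, ENNReal.ofReal (8 * C / M ^ 3 * (1 / 2 : ℝ) ^ s) := by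
          refine ENNReal.tsum_le_tsum fun s => ?_
          rw [← ENNReal.ofReal_toReal (measure_ne_top P (A s))]
          exact ENNReal.ofReal_le_ofReal (hPA s)
      _ = ENNReal.ofReal (∑' s : ℕ, 8 * C / M ^ 3 * (1 / 2 : ℝ) ^ s) :=
          (ENNReal.ofReal_tsum_of_nonneg (fun s => by positivity) hsummable).symm
      _ ≤ ENNReal.ofReal (ε / 2) := by
          apply ENNReal.ofReal_le_ofReal
          rw [tsum_mul_left, tsum_geometric_of_lt_one (by norm_num) (by norm_num)]
          have hM3 : M ≤ M ^ 3 := by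
            simpa using pow_le_pow_right₀ hM1 (show 1 ≤ 3 by norm_num)
          have hM3p : (0 : ℝ) < M ^ 3 := by positivity
          have h32 : 32 * C ≤ ε * M := by
            rw [div_le_iff₀ hε] at hMC; linarith
          have hεM : ε * M ≤ ε * M ^ 3 := mul_le_mul_of_nonneg_left hM3 hε.le
          rw [show ((1 : ℝ) - 1 / 2)⁻¹ = 2 by norm_num]
          rw [div_mul_eq_mul_div, div_le_iff₀ hM3p]
          nlinarith
  -- assemble
  have hle : P {ω | M ^ 4 * r < δ n ω ^ 2} ≤ P B + ENNReal.ofReal (ε / 2) :=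
    calc P {ω | M ^ 4 * r < δ n ω ^ 2} ≤ P (B ∪ ⋃ s, A s) := measure_mono hsub
      _ ≤ P B + P (⋃ s, A s) := measure_union_le _ _
      _ ≤ P B + ∑' s, P (A s) := add_le_add le_rfl (measure_iUnion_le _)
      _ ≤ P B + ENNReal.ofReal (ε / 2) := add_le_add le_rfl hsum
  have hfin : P B + ENNReal.ofReal (ε / 2) ≠ ⊤ :=
    ENNReal.add_ne_top.2 ⟨measure_ne_top P B, ENNReal.ofReal_ne_top⟩
  have htr := ENNReal.toReal_mono hfin hle
  rw [ENNReal.toReal_add (measure_ne_top P B) ENNReal.ofReal_ne_top,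
    ENNReal.toReal_ofReal (by linarith : (0 : ℝ) ≤ ε / 2)] at htr
  have hBeq : P B = P {ω | KZ * (n : ℝ) ^ (-(2 : ℝ) / 3) < |Z n ω|} := by
    rw [hBdef, hrdef]
  have hB2 := hKZ n hn
  rw [← hBeq] at hB2
  linarith
end

section
/- Second-order bias expansion of the AIPW estimator: for fixed nuisance functions α (estimating 1/π_0) and m (estimating μ_0) and binary treatment, the bias E[χ_{α,m}(O)] − ψ_0 of the uncentered AIPW pseudo-outcome equals Σ_{a∈{0,1}} (−1)^{1+a} · E[1(A = a)·(α(a, W) − 1/π_0(a|W))·(μ_0(a, W) − m(a, W))], and hence is bounded in absolute value by Σ_a ‖α(a,·) − π_0^{-1}(a,·)‖_{L²(π_0(a|·)dP_W)} · ‖m(a,·) − μ_0(a,·)‖_{L²(π_0(a|·)dP_W)}. -/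
open MeasureTheory

/-- A measurable function with a uniform bound. -/
def BddM {Ω : Type*} [MeasurableSpace Ω] (f : Ω → ℝ) : Prop :=
  Measurable f ∧ ∃ C, ∀ x, |f x| ≤ C

namespace BddM

variable {Ω : Type*} [MeasurableSpace Ω] {f g : Ω → ℝ}

theorem mono {C : ℝ} (hf : Measurable f) (h : ∀ x, |f x| ≤ C) : BddM f := ⟨hf, C, h⟩

theorem const (c : ℝ) : BddM (fun _ : Ω => c) := ⟨measurable_const, |c|, fun _ => le_rfl⟩

theorem bound (hf : BddM f) : ∃ C, 0 ≤ C ∧ ∀ x, |f x| ≤ C := by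
  obtain ⟨_, C, hC⟩ := hf
  exact ⟨max C 0, le_max_right _ _, fun x => (hC x).trans (le_max_left _ _)⟩

theorem add (hf : BddM f) (hg : BddM g) : BddM (fun x => f x + g x) := by
  obtain ⟨Cf, _, hCf⟩ := hf.bound; obtain ⟨Cg, _, hCg⟩ := hg.bound
  exact ⟨hf.1.add hg.1, Cf + Cg, fun x =>
    (abs_add_le _ _).trans (add_le_add (hCf x) (hCg x))⟩

theorem neg (hf : BddM f) : BddM (fun x => -f x) := by
  obtain ⟨Cf, _, hCf⟩ := hf.bound
  exact ⟨hf.1.neg, Cf, fun x => by simpa using hCf x⟩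

theorem sub (hf : BddM f) (hg : BddM g) : BddM (fun x => f x - g x) := by
  simpa [sub_eq_add_neg] using hf.add hg.neg

theorem mul (hf : BddM f) (hg : BddM g) : BddM (fun x => f x * g x) := by
  obtain ⟨Cf, hCf0, hCf⟩ := hf.bound; obtain ⟨Cg, hCg0, hCg⟩ := hg.bound
  refine ⟨hf.1.mul hg.1, Cf * Cg, fun x => ?_⟩
  rw [abs_mul]
  exact mul_le_mul (hCf x) (hCg x) (abs_nonneg _) hCf0

theorem comp {𝓦 : Type*} [MeasurableSpace 𝓦] {g : 𝓦 → ℝ} (hg : BddM g)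
    {W : Ω → 𝓦} (hW : Measurable W) : BddM (fun x => g (W x)) := by
  obtain ⟨C, _, hC⟩ := hg.bound
  exact ⟨hg.1.comp hW, C, fun x => hC _⟩

theorem integrable (hf : BddM f) (P : Measure Ω) [IsFiniteMeasure P] :
    Integrable f P := by
  obtain ⟨C, _, hC⟩ := hf.bound
  exact (integrable_const C).mono' hf.1.aestronglyMeasurable
    (Filter.Eventually.of_forall fun x => by simpa using hC x)

theorem memℒp2 (hf : BddM f) (P : Measure Ω) [IsFiniteMeasure P] :
    MemLp f (ENNReal.ofReal 2) P := by
  obtain ⟨C, _, hC⟩ := hf.bound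
  exact MemLp.of_bound hf.1.aestronglyMeasurable C
    (Filter.Eventually.of_forall fun x => by simpa using hC x)

end BddM

/-- Cauchy–Schwarz for integrals of bounded measurable functions. -/
theorem abs_integral_mul_le_sqrt {Ω : Type*} [MeasurableSpace Ω]
    (P : Measure Ω) [IsFiniteMeasure P] {f g : Ω → ℝ}
    (hf : BddM f) (hg : BddM g) :
    |∫ x, f x * g x ∂P| ≤
      Real.sqrt (∫ x, f x ^ 2 ∂P) * Real.sqrt (∫ x, g x ^ 2 ∂P) := by
  have hpq : Real.HolderConjugate 2 2 := Real.HolderConjugate.two_two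
  have key := MeasureTheory.integral_mul_norm_le_Lp_mul_Lq hpq (hf.memℒp2 P) (hg.memℒp2 P)
  have h2 : ∀ h : Ω → ℝ, (∫ x, ‖h x‖ ^ (2:ℝ) ∂P) = ∫ x, h x ^ 2 ∂P := by
    intro h
    refine integral_congr_ae (Filter.Eventually.of_forall fun x => ?_)
    show ‖h x‖ ^ (2:ℝ) = h x ^ 2
    rw [show (2:ℝ) = ((2:ℕ):ℝ) by norm_num, Real.rpow_natCast, Real.norm_eq_abs, sq_abs]
  rw [h2, h2] at key
  have hs : ∀ h : Ω → ℝ, (∫ x, h x ^ 2 ∂P) ^ (1/(2:ℝ)) = Real.sqrt (∫ x, h x ^ 2 ∂P) := by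
    intro h
    rw [Real.sqrt_eq_rpow]
  rw [hs, hs] at key
  calc |∫ x, f x * g x ∂P| ≤ ∫ x, ‖f x * g x‖ ∂P := by
        rw [← Real.norm_eq_abs]; exact norm_integral_le_integral_norm _
    _ = ∫ x, ‖f x‖ * ‖g x‖ ∂P := by
        refine integral_congr_ae (Filter.Eventually.of_forall fun x => ?_)
        show ‖f x * g x‖ = ‖f x‖ * ‖g x‖
        rw [norm_mul]
    _ ≤ _ := key

/-- Second-order bias expansion of the AIPW estimator: for fixed nuisance
functions `α` (estimating `1/π₀`) and `m` (estimating `μ₀`) and binary treatment, the bias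
`E[χ_{α,m}(O)] − ψ₀` of the AIPW pseudo-outcome equals
`Σ_{a∈{0,1}} (−1)^{1+a}·E[1(A=a)·(α(a,W) − 1/π₀(a|W))·(μ₀(a,W) − m(a,W))]`, and hence is
bounded in absolute value by the sum over arms of the products of the weighted `L²` norms
of the nuisance errors. -/
theorem aipw_second_order_bias_expansion
    {Ω 𝓦 : Type*} [MeasurableSpace Ω] [MeasurableSpace 𝓦]
    (P : Measure Ω) [IsProbabilityMeasure P]
    (W : Ω → 𝓦) (A : Ω → Bool) (Y : Ω → ℝ)
    (hW : Measurable W) (hA : Measurable A) (hY : Measurable Y)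
    (CY : ℝ) (hYbd : ∀ ω, |Y ω| ≤ CY)
    (π0 μ0 α m : Bool → 𝓦 → ℝ)
    (hπ0meas : ∀ a, Measurable (π0 a)) (hμ0meas : ∀ a, Measurable (μ0 a))
    (hαmeas : ∀ a, Measurable (α a)) (hmmeas : ∀ a, Measurable (m a))
    (η : ℝ) (hη : 0 < η) (hπ0bd : ∀ a w, η ≤ π0 a w ∧ π0 a w ≤ 1 - η)
    (hμ0bd : ∃ c, ∀ a w, |μ0 a w| ≤ c)
    (hαbd : ∃ c, ∀ a w, |α a w| ≤ c)
    (hmbd : ∃ c, ∀ a w, |m a w| ≤ c)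
    -- `π0 a` is the conditional probability of `A = a` given `W`
    (hπ0cond : ∀ a : Bool, ∀ g : 𝓦 → ℝ, Measurable g → (∃ c, ∀ w, |g w| ≤ c) →
      ∫ ω, (if A ω = a then (1 : ℝ) else 0) * g (W ω) ∂P =
        ∫ ω, π0 a (W ω) * g (W ω) ∂P)
    -- `μ0 a` is the conditional expectation of `Y` given `A = a` and `W`
    (hμ0cond : ∀ a : Bool, ∀ g : 𝓦 → ℝ, Measurable g → (∃ c, ∀ w, |g w| ≤ c) →
      ∫ ω, (if A ω = a then (1 : ℝ) else 0) * g (W ω) * Y ω ∂P =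
        ∫ ω, (if A ω = a then (1 : ℝ) else 0) * g (W ω) * μ0 a (W ω) ∂P)
    (ψ0 : ℝ) (hψ0 : ψ0 = ∫ ω, (μ0 true (W ω) - μ0 false (W ω)) ∂P)
    (χ : Ω → ℝ)
    (hχ : ∀ ω, χ ω = m true (W ω) - m false (W ω) +
      ((if A ω then α true (W ω) else 0) - (if A ω then 0 else α false (W ω))) *
        (Y ω - m (A ω) (W ω))) :
    ((∫ ω, χ ω ∂P) - ψ0 =
      (∫ ω, (if A ω then (1 : ℝ) else 0) * (α true (W ω) - (π0 true (W ω))⁻¹) *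
          (μ0 true (W ω) - m true (W ω)) ∂P) -
        ∫ ω, (if A ω then (0 : ℝ) else 1) * (α false (W ω) - (π0 false (W ω))⁻¹) *
          (μ0 false (W ω) - m false (W ω)) ∂P) ∧
    |(∫ ω, χ ω ∂P) - ψ0| ≤
      Real.sqrt (∫ ω, π0 true (W ω) * (α true (W ω) - (π0 true (W ω))⁻¹) ^ 2 ∂P) *
          Real.sqrt (∫ ω, π0 true (W ω) * (m true (W ω) - μ0 true (W ω)) ^ 2 ∂P) +
        Real.sqrt (∫ ω, π0 false (W ω) * (α false (W ω) - (π0 false (W ω))⁻¹) ^ 2 ∂P) *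
          Real.sqrt (∫ ω, π0 false (W ω) * (m false (W ω) - μ0 false (W ω)) ^ 2 ∂P) := by
  classical
  obtain ⟨Cμ, hCμ⟩ := hμ0bd
  obtain ⟨Cα, hCα⟩ := hαbd
  obtain ⟨Cm, hCm⟩ := hmbd
  have Bμ : ∀ a, BddM (μ0 a) := fun a => ⟨hμ0meas a, Cμ, hCμ a⟩
  have Bα : ∀ a, BddM (α a) := fun a => ⟨hαmeas a, Cα, hCα a⟩
  have Bm : ∀ a, BddM (m a) := fun a => ⟨hmmeas a, Cm, hCm a⟩
  have hπpos : ∀ a w, 0 < π0 a w := fun a w => lt_of_lt_of_le hη (hπ0bd a w).1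
  have hπle1 : ∀ a w, π0 a w ≤ 1 := fun a w => (hπ0bd a w).2.trans (by linarith)
  have Bπinv : ∀ a, BddM (fun w => (π0 a w)⁻¹) := fun a => ⟨(hπ0meas a).inv, η⁻¹, fun w => by
    rw [abs_of_pos (inv_pos.2 (hπpos a w))]
    exact inv_anti₀ hη (hπ0bd a w).1⟩
  have Bind : ∀ a : Bool, BddM (fun ω => if A ω = a then (1:ℝ) else 0) := fun a =>
    ⟨Measurable.ite (hA (measurableSet_singleton a)) measurable_const measurable_const,
      1, fun ω => by by_cases h : A ω = a <;> simp [h]⟩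
  have BY : BddM Y := ⟨hY, CY, hYbd⟩
  have Bsqrtπ : ∀ a, BddM (fun w => Real.sqrt (π0 a w)) := fun a =>
    ⟨(Real.continuous_sqrt.measurable).comp (hπ0meas a), 1, fun w => by
      rw [abs_of_nonneg (Real.sqrt_nonneg _)]
      exact (Real.sqrt_le_sqrt (hπle1 a w)).trans (le_of_eq Real.sqrt_one)⟩
  have Icongr : ∀ {f g : Ω → ℝ}, (∀ ω, f ω = g ω) →
      (∫ ω, f ω ∂P) = ∫ ω, g ω ∂P := fun h =>
    integral_congr_ae (Filter.Eventually.of_forall h)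
  have Isub : ∀ {f g : Ω → ℝ}, BddM f → BddM g →
      (∫ ω, (f ω - g ω) ∂P) = (∫ ω, f ω ∂P) - ∫ ω, g ω ∂P := fun hf hg =>
    integral_sub (hf.integrable P) (hg.integrable P)
  have Iadd : ∀ {f g : Ω → ℝ}, BddM f → BddM g →
      (∫ ω, (f ω + g ω) ∂P) = (∫ ω, f ω ∂P) + ∫ ω, g ω ∂P := fun hf hg =>
    integral_add (hf.integrable P) (hg.integrable P)
  -- per-arm second-order expansion
  have harm : ∀ a : Bool,
      ((∫ ω, (m a (W ω) + (if A ω = a then (1:ℝ) else 0) *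
            (α a (W ω) * (Y ω - m a (W ω)))) ∂P) - ∫ ω, μ0 a (W ω) ∂P)
      = ∫ ω, (if A ω = a then (1:ℝ) else 0) *
          ((α a (W ω) - (π0 a (W ω))⁻¹) * (μ0 a (W ω) - m a (W ω))) ∂P := by
    intro a
    have BmW := (Bm a).comp hW
    have BμW := (Bμ a).comp hW
    have BαW := (Bα a).comp hW
    have BπinvW := (Bπinv a).comp hW
    -- correction term
    have hT : (∫ ω, (if A ω = a then (1:ℝ) else 0) * (α a (W ω) * (Y ω - m a (W ω))) ∂P)
        = ∫ ω, (if A ω = a then (1:ℝ) else 0) * (α a (W ω) * (μ0 a (W ω) - m a (W ω))) ∂P := by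
      have e1 : (∫ ω, (if A ω = a then (1:ℝ) else 0) * (α a (W ω) * (Y ω - m a (W ω))) ∂P)
          = (∫ ω, (if A ω = a then (1:ℝ) else 0) * α a (W ω) * Y ω ∂P)
            - ∫ ω, (if A ω = a then (1:ℝ) else 0) * (α a (W ω) * m a (W ω)) ∂P := by
        rw [← Isub (((Bind a).mul BαW).mul BY) ((Bind a).mul (BαW.mul BmW))]
        exact Icongr fun ω => by ring
      have e2 : (∫ ω, (if A ω = a then (1:ℝ) else 0) * (α a (W ω) * (μ0 a (W ω) - m a (W ω))) ∂P)
          = (∫ ω, (if A ω = a then (1:ℝ) else 0) * α a (W ω) * μ0 a (W ω) ∂P)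
            - ∫ ω, (if A ω = a then (1:ℝ) else 0) * (α a (W ω) * m a (W ω)) ∂P := by
        rw [← Isub (((Bind a).mul BαW).mul BμW) ((Bind a).mul (BαW.mul BmW))]
        exact Icongr fun ω => by ring
      rw [e1, e2, hμ0cond a (α a) (hαmeas a) ⟨Cα, hCα a⟩]
    -- regression term via the propensity score
    have hR : (∫ ω, (μ0 a (W ω) - m a (W ω)) ∂P)
        = ∫ ω, (if A ω = a then (1:ℝ) else 0) *
            ((π0 a (W ω))⁻¹ * (μ0 a (W ω) - m a (W ω))) ∂P := by
      have hg : Measurable (fun w => (π0 a w)⁻¹ * (μ0 a w - m a w)) :=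
        ((Bπinv a).mul ((Bμ a).sub (Bm a))).1
      have hgb : ∃ c, ∀ w, |(π0 a w)⁻¹ * (μ0 a w - m a w)| ≤ c := by
        obtain ⟨C, _, hC⟩ := ((Bπinv a).mul ((Bμ a).sub (Bm a))).bound
        exact ⟨C, hC⟩
      rw [hπ0cond a _ hg hgb]
      refine Icongr fun ω => ?_
      rw [← mul_assoc, mul_inv_cancel₀ (hπpos a (W ω)).ne', one_mul]
    calc ((∫ ω, (m a (W ω) + (if A ω = a then (1:ℝ) else 0) *
            (α a (W ω) * (Y ω - m a (W ω)))) ∂P) - ∫ ω, μ0 a (W ω) ∂P)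
        = (∫ ω, m a (W ω) ∂P)
            + (∫ ω, (if A ω = a then (1:ℝ) else 0) * (α a (W ω) * (Y ω - m a (W ω))) ∂P)
            - ∫ ω, μ0 a (W ω) ∂P := by
          rw [Iadd BmW ((Bind a).mul (BαW.mul (BY.sub BmW)))]
      _ = (∫ ω, (if A ω = a then (1:ℝ) else 0) * (α a (W ω) * (μ0 a (W ω) - m a (W ω))) ∂P)
            - ∫ ω, (μ0 a (W ω) - m a (W ω)) ∂P := by
          rw [hT, Isub BμW BmW]; ring
      _ = (∫ ω, (if A ω = a then (1:ℝ) else 0) * (α a (W ω) * (μ0 a (W ω) - m a (W ω))) ∂P)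
            - ∫ ω, (if A ω = a then (1:ℝ) else 0) *
                ((π0 a (W ω))⁻¹ * (μ0 a (W ω) - m a (W ω))) ∂P := by rw [hR]
      _ = ∫ ω, (if A ω = a then (1:ℝ) else 0) *
            ((α a (W ω) - (π0 a (W ω))⁻¹) * (μ0 a (W ω) - m a (W ω))) ∂P := by
          rw [← Isub ((Bind a).mul (BαW.mul (BμW.sub BmW)))
            ((Bind a).mul (BπinvW.mul (BμW.sub BmW)))]
          exact Icongr fun ω => by ring
  -- splitting the integral of χ into arms
  have hχsplit : (∫ ω, χ ω ∂P)
      = (∫ ω, (m true (W ω) + (if A ω = true then (1:ℝ) else 0) *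
            (α true (W ω) * (Y ω - m true (W ω)))) ∂P)
        - ∫ ω, (m false (W ω) + (if A ω = false then (1:ℝ) else 0) *
            (α false (W ω) * (Y ω - m false (W ω)))) ∂P := by
    have Ba : ∀ a : Bool, BddM (fun ω => m a (W ω) + (if A ω = a then (1:ℝ) else 0) *
        (α a (W ω) * (Y ω - m a (W ω)))) := fun a =>
      ((Bm a).comp hW).add ((Bind a).mul (((Bα a).comp hW).mul (BY.sub ((Bm a).comp hW))))
    rw [← Isub (Ba true) (Ba false)]
    refine Icongr fun ω => ?_
    rw [hχ ω]
    cases hAo : A ω <;> simp [hAo] <;> ring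
  have hψsplit : ψ0 = (∫ ω, μ0 true (W ω) ∂P) - ∫ ω, μ0 false (W ω) ∂P := by
    rw [hψ0, ← Isub ((Bμ true).comp hW) ((Bμ false).comp hW)]
  -- the two arm bias terms
  set Bt := ∫ ω, (if A ω = true then (1:ℝ) else 0) *
      ((α true (W ω) - (π0 true (W ω))⁻¹) * (μ0 true (W ω) - m true (W ω))) ∂P with hBt
  set Bf := ∫ ω, (if A ω = false then (1:ℝ) else 0) *
      ((α false (W ω) - (π0 false (W ω))⁻¹) * (μ0 false (W ω) - m false (W ω))) ∂P with hBf
  have hbias : (∫ ω, χ ω ∂P) - ψ0 = Bt - Bf := by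
    rw [hχsplit, hψsplit]; linarith [harm true, harm false]
  -- match the associativity/indicator form of the statement
  have hBt' : Bt = ∫ ω, (if A ω then (1 : ℝ) else 0) * (α true (W ω) - (π0 true (W ω))⁻¹) *
      (μ0 true (W ω) - m true (W ω)) ∂P := by
    rw [hBt]; exact Icongr fun ω => by cases hAo : A ω <;> simp [hAo] <;> ring
  have hBf' : Bf = ∫ ω, (if A ω then (0 : ℝ) else 1) * (α false (W ω) - (π0 false (W ω))⁻¹) *
      (μ0 false (W ω) - m false (W ω)) ∂P := by
    rw [hBf]; exact Icongr fun ω => by cases hAo : A ω <;> simp [hAo] <;> ring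
  have heq : (∫ ω, χ ω ∂P) - ψ0 =
      (∫ ω, (if A ω then (1 : ℝ) else 0) * (α true (W ω) - (π0 true (W ω))⁻¹) *
          (μ0 true (W ω) - m true (W ω)) ∂P) -
        ∫ ω, (if A ω then (0 : ℝ) else 1) * (α false (W ω) - (π0 false (W ω))⁻¹) *
          (μ0 false (W ω) - m false (W ω)) ∂P := by
    rw [hbias, hBt', hBf']
  refine ⟨heq, ?_⟩
  -- Cauchy–Schwarz bound on each arm
  have harmbd : ∀ a : Bool,
      |∫ ω, (if A ω = a then (1:ℝ) else 0) *
          ((α a (W ω) - (π0 a (W ω))⁻¹) * (μ0 a (W ω) - m a (W ω))) ∂P| ≤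
        Real.sqrt (∫ ω, π0 a (W ω) * (α a (W ω) - (π0 a (W ω))⁻¹) ^ 2 ∂P) *
          Real.sqrt (∫ ω, π0 a (W ω) * (m a (W ω) - μ0 a (W ω)) ^ 2 ∂P) := by
    intro a
    have Bu : BddM (fun w => α a w - (π0 a w)⁻¹) := (Bα a).sub (Bπinv a)
    have Bv : BddM (fun w => μ0 a w - m a w) := (Bμ a).sub (Bm a)
    have hgb : ∃ c, ∀ w, |(α a w - (π0 a w)⁻¹) * (μ0 a w - m a w)| ≤ c := by
      obtain ⟨C, _, hC⟩ := (Bu.mul Bv).bound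
      exact ⟨C, hC⟩
    have h1 : (∫ ω, (if A ω = a then (1:ℝ) else 0) *
          ((α a (W ω) - (π0 a (W ω))⁻¹) * (μ0 a (W ω) - m a (W ω))) ∂P)
        = ∫ ω, (Real.sqrt (π0 a (W ω)) * (α a (W ω) - (π0 a (W ω))⁻¹)) *
            (Real.sqrt (π0 a (W ω)) * (μ0 a (W ω) - m a (W ω))) ∂P := by
      rw [hπ0cond a _ (Bu.mul Bv).1 hgb]
      refine Icongr fun ω => ?_
      set s := Real.sqrt (π0 a (W ω)) with hs
      have h : s * s = π0 a (W ω) := Real.mul_self_sqrt (hπpos a (W ω)).le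
      rw [← h]; ring
    have BF : BddM (fun ω => Real.sqrt (π0 a (W ω)) * (α a (W ω) - (π0 a (W ω))⁻¹)) :=
      ((Bsqrtπ a).comp hW).mul (Bu.comp hW)
    have BG : BddM (fun ω => Real.sqrt (π0 a (W ω)) * (μ0 a (W ω) - m a (W ω))) :=
      ((Bsqrtπ a).comp hW).mul (Bv.comp hW)
    have key := abs_integral_mul_le_sqrt P BF BG
    have h2 : (∫ ω, (Real.sqrt (π0 a (W ω)) * (α a (W ω) - (π0 a (W ω))⁻¹)) ^ 2 ∂P)
        = ∫ ω, π0 a (W ω) * (α a (W ω) - (π0 a (W ω))⁻¹) ^ 2 ∂P := by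
      refine Icongr fun ω => ?_
      set s := Real.sqrt (π0 a (W ω)) with hs
      have h : s * s = π0 a (W ω) := Real.mul_self_sqrt (hπpos a (W ω)).le
      rw [← h]; ring
    have h3 : (∫ ω, (Real.sqrt (π0 a (W ω)) * (μ0 a (W ω) - m a (W ω))) ^ 2 ∂P)
        = ∫ ω, π0 a (W ω) * (m a (W ω) - μ0 a (W ω)) ^ 2 ∂P := by
      refine Icongr fun ω => ?_
      set s := Real.sqrt (π0 a (W ω)) with hs
      have h : s * s = π0 a (W ω) := Real.mul_self_sqrt (hπpos a (W ω)).le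
      rw [← h]; ring
    rw [h1]
    rw [h2, h3] at key
    exact key
  have ht := harmbd true
  have hf := harmbd false
  rw [hbias]
  calc |Bt - Bf| ≤ |Bt| + |Bf| := by
        rw [sub_eq_add_neg]
        exact (abs_add_le _ _).trans (by rw [abs_neg])
    _ ≤ _ := add_le_add ht hf
end
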